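/- For every positive integer i, with b(i,1,k) = ∑_{P(k,i+1)} 1/(l₁⋯l_k), one has b(i,1,i+1) = 1, ∑_{k=1}^{i+1} b(i,1,k)/k! = 1, and ∑_{k=1}^{i+1} (b(i,1,k)/k!)·2^k = i+2. -/

import Mathlib

open Finset Polynomial

/-- The set of `k`-tuples of positive integers summing to `n`. -/
def P (k n : ℕ) : Finset (Fin k → ℕ) :=
  (Finset.Nat.antidiagonalTuple k n).filter fun l => ∀ i, 0 < l i

/-- `∑_{(l₁,…,l_k)∈P(k,n)} 1/(l₁⋯l_k)`. -/
def S (k n : ℕ) : ℚ := ∑ l ∈ P k n, (∏ i, (l i : ℚ))⁻¹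

/-- `e_l(1,2,…,m)` : the l-th elementary symmetric polynomial evaluated at 1,…,m. -/
def esym (m l : ℕ) : ℚ := (((Finset.range m).val.map fun i => ((i : ℚ) + 1)).esymm l)

lemma mem_P {k n : ℕ} {l : Fin k → ℕ} : l ∈ P k n ↔ (∑ i, l i) = n ∧ ∀ i, 0 < l i := by
  simp [P, Finset.Nat.mem_antidiagonalTuple]

lemma S_zero (n : ℕ) : S 0 n = if n = 0 then 1 else 0 := by
  unfold S
  rcases eq_or_ne n 0 with rfl | hn
  · rw [show P 0 0 = {![]} from rfl]
    simp
  · rw [show P 0 n = ∅ by ext l; simp [mem_P, hn.symm]]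
    simp [hn]

lemma S_diag (n : ℕ) : S n n = 1 := by
  have hP : P n n = {fun _ => 1} := by
    ext l
    simp only [mem_P, Finset.mem_singleton]
    constructor
    · rintro ⟨hs, hp⟩
      funext j
      by_contra hne
      have h2 : 2 ≤ l j := by have := hp j; omega
      have hge : ∑ i ∈ Finset.univ.erase j, l i + l j ≥
          ∑ _i ∈ Finset.univ.erase j, 1 + 2 := by
        gcongr with i hi
        exact hp i
      rw [Finset.sum_erase_add _ _ (Finset.mem_univ j)] at hge
      simp only [Finset.sum_const, smul_eq_mul, mul_one,
        Finset.card_erase_of_mem (Finset.mem_univ j), Finset.card_univ,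
        Fintype.card_fin] at hge
      omega
    · rintro rfl
      simp
  simp [S, hP]

lemma S_eq_zero_of_lt {k n : ℕ} (h : n < k) : S k n = 0 := by
  have hP : P k n = ∅ := by
    ext l
    simp only [mem_P, Finset.notMem_empty, iff_false, not_and]
    intro hs hp
    have : k ≤ n := by
      calc k = ∑ _i : Fin k, 1 := by simp
      _ ≤ ∑ i, l i := Finset.sum_le_sum fun i _ => hp i
      _ = n := hs
    omega
  simp [S, hP]

lemma sum_coord (k n : ℕ) (j : Fin (k+1)) :
    ∑ l ∈ P (k+1) n, (l j : ℚ) * (∏ i, (l i : ℚ))⁻¹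
      = ∑ l ∈ P (k+1) n, (l 0 : ℚ) * (∏ i, (l i : ℚ))⁻¹ := by
  refine Finset.sum_nbij' (fun l => l ∘ Equiv.swap j 0) (fun l => l ∘ Equiv.swap j 0)
    ?_ ?_ ?_ ?_ ?_
  · intro l hl
    obtain ⟨hs, hp⟩ := mem_P.1 hl
    refine mem_P.2 ⟨?_, fun i => hp _⟩
    rw [← hs]
    exact Equiv.sum_comp (Equiv.swap j 0) l
  · intro l hl
    obtain ⟨hs, hp⟩ := mem_P.1 hl
    refine mem_P.2 ⟨?_, fun i => hp _⟩
    rw [← hs]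
    exact Equiv.sum_comp (Equiv.swap j 0) l
  · intro l _
    funext i
    simp [Function.comp, Equiv.swap_apply_self]
  · intro l _
    funext i
    simp [Function.comp, Equiv.swap_apply_self]
  · intro l _
    have h1 : (l ∘ Equiv.swap j 0) 0 = l j := by simp
    have h2 : ∏ i, ((l ∘ Equiv.swap j 0) i : ℚ) = ∏ i, (l i : ℚ) :=
      Equiv.prod_comp (Equiv.swap j 0) fun i => (l i : ℚ)
    show (l j : ℚ) * (∏ i, (l i : ℚ))⁻¹
        = ((l ∘ Equiv.swap j 0) 0 : ℚ) * (∏ i, ((l ∘ Equiv.swap j 0) i : ℚ))⁻¹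
    rw [h1, h2]

lemma mul_S (k n : ℕ) :
    (n : ℚ) * S (k+1) n
      = (k+1) * ∑ l ∈ P (k+1) n, (l 0 : ℚ) * (∏ i, (l i : ℚ))⁻¹ := by
  unfold S
  calc (n : ℚ) * ∑ l ∈ P (k+1) n, (∏ i, (l i : ℚ))⁻¹
      = ∑ l ∈ P (k+1) n, ∑ i, (l i : ℚ) * (∏ i', (l i' : ℚ))⁻¹ := by
        rw [Finset.mul_sum]
        refine Finset.sum_congr rfl fun l hl => ?_
        obtain ⟨hs, -⟩ := mem_P.1 hl
        rw [← hs, ← Finset.sum_mul]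
        push_cast
        ring
    _ = ∑ i : Fin (k+1), ∑ l ∈ P (k+1) n, (l i : ℚ) * (∏ i', (l i' : ℚ))⁻¹ :=
        Finset.sum_comm
    _ = ∑ _i : Fin (k+1), ∑ l ∈ P (k+1) n, (l 0 : ℚ) * (∏ i', (l i' : ℚ))⁻¹ :=
        Finset.sum_congr rfl fun i _ => sum_coord k n i
    _ = (k+1) * ∑ l ∈ P (k+1) n, (l 0 : ℚ) * (∏ i', (l i' : ℚ))⁻¹ := by
        rw [Finset.sum_const, Finset.card_univ, Fintype.card_fin, nsmul_eq_mul]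
        push_cast
        ring

lemma head (k n : ℕ) :
    ∑ l ∈ P (k+1) n, (l 0 : ℚ) * (∏ i, (l i : ℚ))⁻¹
      = ∑ m ∈ Finset.range n, S k m := by
  have step1 : ∑ l ∈ P (k+1) n, (l 0 : ℚ) * (∏ i, (l i : ℚ))⁻¹
      = ∑ l ∈ P (k+1) n, (∏ i : Fin k, (l i.succ : ℚ))⁻¹ := by
    refine Finset.sum_congr rfl fun l hl => ?_
    obtain ⟨-, hp⟩ := mem_P.1 hl
    have h0 : (l 0 : ℚ) ≠ 0 := by
      exact_mod_cast (hp 0).ne'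
    rw [Fin.prod_univ_succ, mul_inv, ← mul_assoc, mul_inv_cancel₀ h0, one_mul]
  rw [step1]
  have : (∑ m ∈ Finset.range n, S k m)
      = ∑ p ∈ (Finset.range n).sigma (fun m => P k m), (∏ i, (p.2 i : ℚ))⁻¹ := by
    rw [Finset.sum_sigma]
    rfl
  rw [this]
  refine Finset.sum_nbij' (fun l => ⟨∑ i : Fin k, l i.succ, Fin.tail l⟩)
    (fun p => Fin.cons (n - p.1) p.2) ?_ ?_ ?_ ?_ ?_
  · intro l hl
    obtain ⟨hs, hp⟩ := mem_P.1 hl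
    rw [Fin.sum_univ_succ] at hs
    simp only [Finset.mem_sigma, Finset.mem_range]
    constructor
    · have := hp 0; omega
    · exact mem_P.2 ⟨rfl, fun i => hp i.succ⟩
  · intro p hp
    simp only [Finset.mem_sigma, Finset.mem_range] at hp
    obtain ⟨hm, hP⟩ := hp
    obtain ⟨hs, hpos⟩ := mem_P.1 hP
    refine mem_P.2 ⟨?_, ?_⟩
    · rw [Fin.sum_univ_succ]
      simp only [Fin.cons_zero, Fin.cons_succ]
      rw [hs]
      omega
    · intro i
      refine Fin.cases ?_ ?_ i
      · simp only [Fin.cons_zero]; omega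
      · intro j; simp only [Fin.cons_succ]; exact hpos j
  · intro l hl
    obtain ⟨hs, hp⟩ := mem_P.1 hl
    rw [Fin.sum_univ_succ] at hs
    funext i
    refine Fin.cases ?_ ?_ i
    · simp only [Fin.cons_zero]
      have := hp 0
      omega
    · intro j
      simp [Fin.tail]
  · intro p hp
    ext
    · simp only [Fin.tail_cons, Fin.cons_succ]
      simp only [Finset.mem_sigma, Finset.mem_range] at hp
      obtain ⟨-, hP⟩ := hp
      exact (mem_P.1 hP).1
    · simp [Fin.tail_cons]
  · intro l _
    rfl

lemma stirling (k n : ℕ) :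
    ((n : ℚ) + 1) * S (k+1) (n+1) = (k+1) * S k n + n * S (k+1) n := by
  have h1 : ((n:ℚ)+1) * S (k+1) (n+1) = (k+1) * ∑ m ∈ Finset.range (n+1), S k m := by
    have := (mul_S k (n+1)).trans (by rw [head])
    push_cast at this ⊢
    exact this
  have h2 : (n : ℚ) * S (k+1) n = (k+1) * ∑ m ∈ Finset.range n, S k m :=
    (mul_S k n).trans (by rw [head])
  rw [h1, Finset.sum_range_succ, h2]
  ring

lemma sum_Icc_eq (m : ℕ) (f : ℕ → ℚ) :
    ∑ k ∈ Finset.Icc 1 m, f k = ∑ k ∈ Finset.range m, f (k+1) := by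
  refine Finset.sum_nbij' (fun k => k - 1) (fun k => k + 1) ?_ ?_ ?_ ?_ ?_
  · intro a ha; simp only [Finset.mem_Icc] at ha; simp only [Finset.mem_range]; omega
  · intro a ha; simp only [Finset.mem_range] at ha; simp only [Finset.mem_Icc]; omega
  · intro a ha; simp only [Finset.mem_Icc] at ha; show a - 1 + 1 = a; omega
  · intro a _; show a + 1 - 1 = a; omega
  · intro a ha; simp only [Finset.mem_Icc] at ha
    have : a - 1 + 1 = a := by omega
    show f a = f (a - 1 + 1)
    rw [this]

lemma G_rec (n : ℕ) (t : ℚ) :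
    ((n : ℚ) + 1) * ∑ k ∈ Finset.Icc 1 (n+1), S k (n+1) / k.factorial * t ^ k
      = t * S 0 n + t * (∑ k ∈ Finset.Icc 1 n, S k n / k.factorial * t ^ k)
        + n * (∑ k ∈ Finset.Icc 1 n, S k n / k.factorial * t ^ k) := by
  rw [sum_Icc_eq, sum_Icc_eq, Finset.mul_sum]
  have hterm : ∀ k, ((n : ℚ) + 1) * (S (k+1) (n+1) / (k+1).factorial * t ^ (k+1))
      = S k n / k.factorial * t ^ (k+1)
        + n * (S (k+1) n / (k+1).factorial * t ^ (k+1)) := by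
    intro k
    have hs := stirling k n
    have hfac : ((k+1).factorial : ℚ) = (k+1) * k.factorial := by
      push_cast [Nat.factorial_succ]
      ring
    have hk : ((k : ℚ) + 1) ≠ 0 := by positivity
    have hf : (k.factorial : ℚ) ≠ 0 := by
      exact_mod_cast (Nat.factorial_pos k).ne'
    have hre : ((n:ℚ)+1) * (S (k+1) (n+1) / (k+1).factorial * t ^ (k+1))
        = (((n:ℚ)+1) * S (k+1) (n+1)) * (t ^ (k+1) / (k+1).factorial) := by ring
    rw [hre, hs, hfac]
    field_simp
  rw [Finset.sum_congr rfl fun k _ => hterm k, Finset.sum_add_distrib]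
  have hA : ∑ k ∈ Finset.range (n+1), S k n / k.factorial * t ^ (k+1)
      = t * S 0 n + t * ∑ k ∈ Finset.range n, S (k+1) n / (k+1).factorial * t ^ (k+1) := by
    rw [Finset.sum_range_succ', Finset.mul_sum]
    simp only [Nat.factorial_zero, Nat.cast_one, pow_one]
    rw [add_comm]
    congr 1
    · ring
    · exact Finset.sum_congr rfl fun k _ => by ring
  have hB : ∑ k ∈ Finset.range (n+1), (n : ℚ) * (S (k+1) n / (k+1).factorial * t ^ (k+1))
      = n * ∑ k ∈ Finset.range n, S (k+1) n / (k+1).factorial * t ^ (k+1) := by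
    rw [Finset.sum_range_succ, S_eq_zero_of_lt (by omega), Finset.mul_sum]
    simp
  rw [hA, hB]

lemma G_one (n : ℕ) (hn : 0 < n) :
    ∑ k ∈ Finset.Icc 1 n, S k n / k.factorial * (1:ℚ) ^ k = 1 := by
  induction n with
  | zero => omega
  | succ n ih =>
    rcases Nat.eq_zero_or_pos n with rfl | hn'
    · simp [S_diag 1]
    · have h := G_rec n 1
      rw [ih hn', S_zero, if_neg hn'.ne'] at h
      have hne : ((n:ℚ)+1) ≠ 0 := by positivity
      have h' : ((n:ℚ)+1) * (∑ k ∈ Finset.Icc 1 (n+1), S k (n+1) / k.factorial * (1:ℚ) ^ k)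
          = ((n:ℚ)+1) * 1 := by rw [h]; ring
      exact mul_left_cancel₀ hne h'

lemma G_two (n : ℕ) (hn : 0 < n) :
    ∑ k ∈ Finset.Icc 1 n, S k n / k.factorial * (2:ℚ) ^ k = n + 1 := by
  induction n with
  | zero => omega
  | succ n ih =>
    rcases Nat.eq_zero_or_pos n with rfl | hn'
    · norm_num [S_diag 1]
    · have h := G_rec n 2
      rw [ih hn', S_zero, if_neg hn'.ne'] at h
      have hne : ((n:ℚ)+1) ≠ 0 := by positivity
      have h' : ((n:ℚ)+1) * (∑ k ∈ Finset.Icc 1 (n+1), S k (n+1) / k.factorial * (2:ℚ) ^ k)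
          = ((n:ℚ)+1) * ((n:ℚ)+1+1) := by rw [h]; push_cast; ring
      have := mul_left_cancel₀ hne h'
      rw [this]; push_cast; ring

theorem stmt4 (i : ℕ) (hi : 0 < i) :
    S (i + 1) (i + 1) = 1 ∧
    ∑ k ∈ Finset.Icc 1 (i + 1), S k (i + 1) / k.factorial = 1 ∧
    ∑ k ∈ Finset.Icc 1 (i + 1), S k (i + 1) / k.factorial * 2 ^ k = i + 2 := by
  refine ⟨S_diag (i+1), ?_, ?_⟩
  · have := G_one (i+1) (by omega)
    simpa using this
  · have := G_two (i+1) (by omega)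
    rw [this]; push_cast; ring
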